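/- Let n ≥ 1. A chain ∅ ⊊ S_1 ⊊ S_2 ⊊ ⋯ ⊊ S_j ⊊ {1,…,n} of subsets of {1,…,n} is the descent chain of some permutation π ∈ S_n (i.e., equals the chain {π({1,…,k}) : k ∈ Des(π)} restricted to the given ranks, with Des(π) ⊇ {|S_1|,…,|S_j|}) if and only if for every 1 ≤ i ≤ j, max(S_i ∖ S_{i-1}) > min(S_{i+1} ∖ S_i), where S_0 = ∅ and S_{j+1} = {1,…,n}. -/

import Mathlib

/-- The chain `L` of subsets of `{1,…,n}` (encoded as `Finset (Fin n)`) with the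
sentinels `S₀ = ∅` and `S_{j+1} = univ` adjoined. -/
def withSent (n : ℕ) (L : List (Finset (Fin n))) : List (Finset (Fin n)) :=
  (∅ :: L) ++ [Finset.univ]

/-- `L` is a face of the h-complex `Δₙ` of the truncated Boolean algebra: a strictly
increasing chain of proper nonempty subsets such that, with sentinels adjoined,
every consecutive pair of blocks has `max (S_i \ S_{i-1}) > min (S_{i+1} \ S_i)`
(expressed as: some element of the lower difference exceeds some element of the
upper difference, which is equivalent since max ≥ a and min ≤ c). -/
def IsFace (n : ℕ) (L : List (Finset (Fin n))) : Prop :=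
  (withSent n L).Chain' (· ⊂ ·) ∧
  ∀ i, ∀ h : i + 2 < (withSent n L).length,
    ∃ a ∈ (withSent n L).get ⟨i + 1, by omega⟩ \ (withSent n L).get ⟨i, by omega⟩,
      ∃ c ∈ (withSent n L).get ⟨i + 2, h⟩ \ (withSent n L).get ⟨i + 1, by omega⟩, c < a

/-- The descent set of `π ∈ Sₙ` in one-line notation, as a set of 1-indexed ranks:
`k ∈ Des π` iff `1 ≤ k ≤ n-1` and the letter in position `k` exceeds the one in
position `k+1` (positions are 0-indexed internally). -/
def Des {n : ℕ} (π : Equiv.Perm (Fin n)) : Set ℕ :=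
  {k | ∃ h : k < n, 0 < k ∧ π ⟨k, h⟩ < π ⟨k - 1, Nat.lt_of_le_of_lt (Nat.sub_le k 1) h⟩}

/-- The number of descents of `π`. -/
noncomputable def des {n : ℕ} (π : Equiv.Perm (Fin n)) : ℕ := (Des π).ncard

/-- `π({1,…,k})`: the image of the first `k` positions under `π`. -/
def firstK {n : ℕ} (π : Equiv.Perm (Fin n)) (k : ℕ) : Finset (Fin n) :=
  (Finset.univ.filter fun i : Fin n => (i : ℕ) < k).image π

/- ### auxiliary development -/

namespace DCAux

open List Finset

variable {n : ℕ}

/-- concatenation of the sorted successive differences of a chain starting at `A`. -/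
def chainList : Finset (Fin n) → List (Finset (Fin n)) → List (Fin n)
  | _, [] => []
  | A, B :: rest => (B \ A).sort (· ≤ ·) ++ chainList B rest

lemma subset_getLast {A : Finset (Fin n)} {l : List (Finset (Fin n))}
    (h : (A :: l).Chain' (· ⊂ ·)) : A ⊆ (A :: l).getLast (by simp) := by
  cases l with
  | nil => simp
  | cons B l =>
    have hp := List.isChain_iff_pairwise.mp h
    rw [List.getLast_cons (by simp)]
    exact ((List.pairwise_cons.mp hp).1 _ (List.getLast_mem (by simp))).subset

lemma mem_chainList {A : Finset (Fin n)} {l : List (Finset (Fin n))}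
    (h : (A :: l).Chain' (· ⊂ ·)) {x : Fin n} :
    x ∈ chainList A l ↔ x ∈ (A :: l).getLast (by simp) \ A := by
  induction l generalizing A with
  | nil => simp [chainList]
  | cons B l ih =>
    have htail : (B :: l).Chain' (· ⊂ ·) := h.tail
    have hAB : A ⊂ B := (List.isChain_cons.mp h).1 B rfl
    have hBlast : B ⊆ (B :: l).getLast (by simp) := subset_getLast htail
    have hlast : ((A :: B :: l).getLast (by simp)) = (B :: l).getLast (by simp) := by
      simp [List.getLast_cons]
    simp only [chainList, List.mem_append, Finset.mem_sort, ih htail, hlast,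
      Finset.mem_sdiff]
    constructor
    · rintro (⟨h1, h2⟩ | ⟨h1, h2⟩)
      · exact ⟨hBlast h1, h2⟩
      · exact ⟨h1, fun hxA => h2 (hAB.subset hxA)⟩
    · rintro ⟨h1, h2⟩
      by_cases hxB : x ∈ B
      · exact Or.inl ⟨hxB, h2⟩
      · exact Or.inr ⟨h1, hxB⟩

lemma nodup_chainList {A : Finset (Fin n)} {l : List (Finset (Fin n))}
    (h : (A :: l).Chain' (· ⊂ ·)) : (chainList A l).Nodup := by
  induction l generalizing A with
  | nil => simp [chainList]
  | cons B l ih =>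
    have htail : (B :: l).Chain' (· ⊂ ·) := h.tail
    refine List.Nodup.append (Finset.sort_nodup _ _) (ih htail) ?_
    intro x hx hx'
    have := (mem_chainList htail).mp hx'
    simp only [Finset.mem_sdiff] at this
    rw [Finset.mem_sort] at hx
    exact this.2 (Finset.mem_sdiff.mp hx).1

lemma toFinset_chainList {A : Finset (Fin n)} {l : List (Finset (Fin n))}
    (h : (A :: l).Chain' (· ⊂ ·)) :
    (chainList A l).toFinset = (A :: l).getLast (by simp) \ A := by
  ext x; simp [List.mem_toFinset, mem_chainList h]

lemma length_chainList {A : Finset (Fin n)} {l : List (Finset (Fin n))}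
    (h : (A :: l).Chain' (· ⊂ ·)) :
    (chainList A l).length = ((A :: l).getLast (by simp)).card - A.card := by
  rw [← List.toFinset_card_of_nodup (nodup_chainList h), toFinset_chainList h,
    Finset.card_sdiff_of_subset (subset_getLast h)]

lemma subset_get {A : Finset (Fin n)} {l : List (Finset (Fin n))}
    (h : (A :: l).Chain' (· ⊂ ·)) (i : ℕ) (hi : i < (A :: l).length) :
    A ⊆ (A :: l).get ⟨i, hi⟩ := by
  rcases i with _ | i
  · simp
  · have hp := List.isChain_iff_pairwise.mp h
    have : (A :: l).get ⟨i + 1, hi⟩ = l.get ⟨i, by simpa using hi⟩ := rfl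
    rw [this]
    exact ((List.pairwise_cons.mp hp).1 _ (l.get_mem _)).subset

lemma chainList_drop {l : List (Finset (Fin n))} :
    ∀ (A : Finset (Fin n)), (A :: l).Chain' (· ⊂ ·) →
    ∀ i (hi : i < (A :: l).length),
      (chainList A l).drop (((A :: l).get ⟨i, hi⟩).card - A.card) =
        chainList ((A :: l).get ⟨i, hi⟩) (l.drop i) := by
  induction l with
  | nil =>
    intro A h i hi
    simp only [List.length_cons, List.length_nil] at hi
    obtain rfl : i = 0 := by omega
    simp [chainList]
  | cons B l ih =>
    intro A h i hi
    rcases i with _ | i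
    · simp
    · have htail : (B :: l).Chain' (· ⊂ ·) := h.tail
      have hAB : A ⊂ B := (List.isChain_cons.mp h).1 B rfl
      have hget : (A :: B :: l).get ⟨i + 1, hi⟩ = (B :: l).get ⟨i, by simpa using hi⟩ := rfl
      have hBX : B ⊆ (B :: l).get ⟨i, by simpa using hi⟩ := subset_get htail i _
      have hcards : A.card < B.card := Finset.card_lt_card hAB
      have hcards2 : B.card ≤ ((B :: l).get ⟨i, by simpa using hi⟩).card :=
        Finset.card_le_card hBX
      rw [hget]
      show ((B \ A).sort (· ≤ ·) ++ chainList B l).drop _ = _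
      rw [List.drop_append, List.drop_eq_nil_of_le
        (by rw [Finset.length_sort, Finset.card_sdiff_of_subset hAB.subset]; omega), List.nil_append,
        Finset.length_sort, Finset.card_sdiff_of_subset hAB.subset]
      have : ((B :: l).get ⟨i, by simpa using hi⟩).card - A.card - (B.card - A.card)
          = ((B :: l).get ⟨i, by simpa using hi⟩).card - B.card := by omega
      rw [this]
      exact ih B htail i _

lemma getElem_congr' {α : Type*} (l : List α) {i j : ℕ} (h : i = j) (hi : i < l.length) :
    l[i]'hi = l[j]'(h ▸ hi) := by subst h; rfl

lemma firstK_zero {π : Equiv.Perm (Fin n)} : firstK π 0 = ∅ := by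
  simp [firstK]

lemma firstK_top {π : Equiv.Perm (Fin n)} : firstK π n = Finset.univ := by
  apply Finset.eq_univ_iff_forall.mpr
  intro x
  simp only [firstK, Finset.mem_image, Finset.mem_filter, Finset.mem_univ, true_and]
  exact ⟨π.symm x, (π.symm x).2, π.apply_symm_apply x⟩

lemma mem_firstK {π : Equiv.Perm (Fin n)} {k : ℕ} {x : Fin n} :
    x ∈ firstK π k ↔ ∃ j : Fin n, (j : ℕ) < k ∧ π j = x := by
  simp [firstK]

end DCAux

lemma withSent_eq (n : ℕ) (L : List (Finset (Fin n))) :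
    withSent n L = ∅ :: (L ++ [Finset.univ]) := rfl

lemma withSent_length (n : ℕ) (L : List (Finset (Fin n))) :
    (withSent n L).length = L.length + 2 := by simp [withSent]

lemma withSent_getElem_succ (n : ℕ) (L : List (Finset (Fin n))) (i : ℕ) (h : i < L.length) :
    (withSent n L)[i + 1]'(by rw [withSent_length]; omega) = L[i] := by
  show (∅ :: (L ++ [Finset.univ]))[i + 1]'(by simp; omega) = L[i]
  rw [List.getElem_cons_succ, List.getElem_append_left h]

lemma withSent_getElem_last (n : ℕ) (L : List (Finset (Fin n))) :
    (withSent n L)[L.length + 1]'(by rw [withSent_length]; omega) = Finset.univ := by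
  show (∅ :: (L ++ [Finset.univ]))[L.length + 1]'(by simp) = Finset.univ
  rw [List.getElem_cons_succ]
  exact List.getElem_concat_length rfl _

/-- for `n ≥ 1`, a strict chain `∅ ⊊ S₁ ⊊ ⋯ ⊊ S_j ⊊ {1,…,n}` is
(part of) the descent chain of some permutation `π ∈ Sₙ` — i.e. each `Sᵢ` is the
image of the first `|Sᵢ|` positions of `π` and `|Sᵢ| ∈ Des π` — if and only if
`max (Sᵢ \ S_{i-1}) > min (S_{i+1} \ Sᵢ)` for all `1 ≤ i ≤ j` (which, together
with the chain hypothesis, is `IsFace n L`). -/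
theorem descent_chain_iff_face (n : ℕ) (hn : 1 ≤ n) (L : List (Finset (Fin n)))
    (hchain : (withSent n L).Chain' (· ⊂ ·)) :
    (∃ π : Equiv.Perm (Fin n), ∀ S ∈ L, S = firstK π S.card ∧ S.card ∈ Des π) ↔
      IsFace n L := by
  constructor
  · rintro ⟨π, hπ⟩
    refine ⟨hchain, ?_⟩
    intro i h
    have hlen : (withSent n L).length = L.length + 2 := withSent_length n L
    have hiL : i < L.length := by omega
    -- every entry of the chain is `firstK π` of its cardinality
    have hget : ∀ m (hm : m < (withSent n L).length),
        (withSent n L)[m] = firstK π ((withSent n L)[m]'hm).card := by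
      intro m hm
      rcases m with _ | m
      · show (∅ : Finset (Fin n)) = firstK π (∅ : Finset (Fin n)).card
        rw [Finset.card_empty, DCAux.firstK_zero]
      · rcases Nat.lt_or_ge m L.length with hmL | hmL
        · rw [withSent_getElem_succ n L m hmL]
          exact (hπ L[m] (List.getElem_mem _)).1
        · have hm' : m = L.length := by omega
          subst hm'
          rw [withSent_getElem_last n L]
          rw [Finset.card_univ, Fintype.card_fin]
          exact DCAux.firstK_top.symm
    -- consecutive strict inclusions
    have hcons : ∀ m (hm : m + 1 < (withSent n L).length),
        (withSent n L)[m]'(by omega) ⊂ (withSent n L)[m + 1]'hm := by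
      intro m hm
      have := List.isChain_iff_getElem.mp hchain m (by omega)
      simpa [List.get_eq_getElem] using this
    simp only [List.get_eq_getElem]
    set A := (withSent n L)[i]'(by omega) with hA
    set B := (withSent n L)[i + 1]'(by omega) with hB
    set D := (withSent n L)[i + 2]'h with hD
    have hAB : A ⊂ B := hcons i (by omega)
    have hBD : B ⊂ D := hcons (i + 1) h
    have hBL : B = L[i]'hiL := withSent_getElem_succ n L i hiL
    obtain ⟨hBf, hBdes⟩ := hπ (L[i]'hiL) (List.getElem_mem _)
    rw [← hBL] at hBf hBdes
    obtain ⟨hbn, hbpos, hdes⟩ := hBdes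
    have hAf : A = firstK π A.card := hget i (by omega)
    have hDf : D = firstK π D.card := hget (i + 2) h
    have hab : A.card < B.card := Finset.card_lt_card hAB
    have hbd : B.card < D.card := Finset.card_lt_card hBD
    have hBf' := Finset.ext_iff.mp hBf
    have hAf' := Finset.ext_iff.mp hAf
    have hDf' := Finset.ext_iff.mp hDf
    refine ⟨π ⟨B.card - 1, by omega⟩, ?_, π ⟨B.card, hbn⟩, ?_, hdes⟩
    · rw [Finset.mem_sdiff]
      constructor
      · refine (hBf' _).mpr (DCAux.mem_firstK.mpr ⟨⟨B.card - 1, by omega⟩, by show B.card - 1 < B.card; omega, rfl⟩)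
      · intro hmem
        obtain ⟨j, hj, hj2⟩ := DCAux.mem_firstK.mp ((hAf' _).mp hmem)
        have := π.injective hj2
        have : (j : ℕ) = B.card - 1 := congrArg Fin.val this
        omega
    · rw [Finset.mem_sdiff]
      constructor
      · refine (hDf' _).mpr (DCAux.mem_firstK.mpr ⟨⟨B.card, hbn⟩, by simpa using hbd, rfl⟩)
      · intro hmem
        obtain ⟨j, hj, hj2⟩ := DCAux.mem_firstK.mp ((hBf' _).mp hmem)
        have := π.injective hj2
        have : (j : ℕ) = B.card := congrArg Fin.val this
        omega
  · rintro ⟨-, hface⟩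
    classical
    set l₀ : List (Finset (Fin n)) := L ++ [Finset.univ] with hl₀
    have hch0 : (∅ :: l₀).Chain' (· ⊂ ·) := hchain
    have hlast : (∅ :: l₀).getLast (by simp) = Finset.univ := by
      rw [List.getLast_cons (by simp [hl₀])]
      exact List.getLast_concat
    set M := DCAux.chainList (∅ : Finset (Fin n)) l₀ with hMdef
    have hMlen : M.length = n := by
      rw [hMdef, DCAux.length_chainList hch0, hlast]
      simp
    have hnd : M.Nodup := DCAux.nodup_chainList hch0
    have hmemM : ∀ x : Fin n, x ∈ M := by
      intro x
      rw [hMdef, DCAux.mem_chainList hch0, hlast]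
      simp
    have hinj : Function.Injective (fun i : Fin n => M.get (Fin.cast hMlen.symm i)) := by
      intro i j hij
      have h2 : Fin.cast hMlen.symm i = Fin.cast hMlen.symm j :=
        (List.Nodup.get_inj_iff hnd).mp hij
      exact Fin.cast_injective _ h2
    set π : Equiv.Perm (Fin n) :=
      Equiv.ofBijective _ ((Fintype.bijective_iff_injective_and_card _).mpr ⟨hinj, rfl⟩)
      with hπdef
    have hπ' : ∀ (i : ℕ) (hi : i < n), π ⟨i, hi⟩ = M[i]'(by omega) := by
      intro i hi
      rfl
    have hfirst : ∀ k, k ≤ n → firstK π k = (M.take k).toFinset := by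
      intro k hk
      ext x
      simp only [List.mem_toFinset]
      rw [DCAux.mem_firstK, List.mem_take_iff_getElem]
      constructor
      · rintro ⟨j, hj, rfl⟩
        refine ⟨(j : ℕ), by omega, ?_⟩
        rw [← hπ' j j.2]
      · rintro ⟨i, hi, rfl⟩
        have hin : i < n := by omega
        refine ⟨⟨i, hin⟩, by show i < k; omega, hπ' i hin⟩
    have hcons : ∀ m (hm : m + 1 < (∅ :: l₀).length),
        (∅ :: l₀)[m]'(by omega) ⊂ (∅ :: l₀)[m + 1]'hm := by
      intro m hm
      have := List.isChain_iff_getElem.mp hch0 m (by omega)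
      simpa [List.get_eq_getElem] using this
    refine ⟨π, ?_⟩
    intro S hS
    obtain ⟨p, hp, rfl⟩ := List.mem_iff_getElem.mp hS
    have hpl₀ : p < l₀.length := by simp [hl₀]; omega
    have hp1 : p + 1 < l₀.length := by simp [hl₀]; omega
    set B := L[p] with hBdef
    have hl₀p : l₀[p]'hpl₀ = B := List.getElem_append_left hp
    set A := (∅ :: l₀)[p]'(by simp; omega) with hAdef
    set D := (∅ :: l₀)[p + 2]'(by simp [hl₀]; omega) with hDdef
    have hBc : (∅ :: l₀)[p + 1]'(by simp; omega) = B := by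
      rw [List.getElem_cons_succ]
      exact hl₀p
    have hAB : A ⊂ B := by
      have := hcons p (by simp [hl₀]; omega)
      rwa [hBc] at this
    have hBD : B ⊂ D := by
      have := hcons (p + 1) (by simp [hl₀]; omega)
      rwa [hBc] at this
    set k := B.card with hkdef
    have hAk : A.card < k := Finset.card_lt_card hAB
    have hk_lt : k < n := by
      have h1 : k < D.card := Finset.card_lt_card hBD
      have h2 : D.card ≤ n := by
        simpa using Finset.card_le_univ D
      omega
    have hk_pos : 0 < k := by omega
    -- structure of M after dropping A.card elements
    have hseq1 : l₀.drop p = B :: l₀.drop (p + 1) := by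
      rw [List.drop_eq_getElem_cons hpl₀, hl₀p]
    have hseq2 : l₀.drop (p + 1) = D :: l₀.drop (p + 2) := by
      rw [List.drop_eq_getElem_cons hp1]
      rfl
    set s1 := (B \ A).sort (· ≤ ·) with hs1
    set s2 := (D \ B).sort (· ≤ ·) with hs2
    have hdropA := DCAux.chainList_drop (l := l₀) ∅ hch0 p (by simp [hl₀]; omega)
    simp only [List.get_eq_getElem, Finset.card_empty, Nat.sub_zero] at hdropA
    have hstruct : M.drop A.card =
        s1 ++ (s2 ++ DCAux.chainList D (l₀.drop (p + 2))) := by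
      rw [hMdef]
      rw [hdropA, hseq1, hseq2]
      rfl
    have hlen1 : s1.length = k - A.card := by
      rw [hs1, Finset.length_sort, Finset.card_sdiff_of_subset hAB.subset]
    have hs2pos : 0 < s2.length := by
      rw [hs2, Finset.length_sort]
      exact Finset.card_pos.mpr (Finset.sdiff_nonempty.mpr hBD.not_subset)
    have hBAne : (B \ A).Nonempty := Finset.sdiff_nonempty.mpr hAB.not_subset
    have hDBne : (D \ B).Nonempty := Finset.sdiff_nonempty.mpr hBD.not_subset
    have hdlen : (M.drop A.card).length = n - A.card := by
      rw [List.length_drop, hMlen]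
    -- value at position k-1 : max of B \ A
    have hv1 : M[k - 1]'(by omega) = (B \ A).max' hBAne := by
      have e1 : (M.drop A.card)[k - 1 - A.card]'(by omega) = M[k - 1]'(by omega) := by
        rw [List.getElem_drop]
        exact DCAux.getElem_congr' M (by omega) _
      rw [← e1, List.getElem_of_eq hstruct, List.getElem_append_left (by omega)]
      rw [DCAux.getElem_congr' s1 (show k - 1 - A.card = s1.length - 1 by omega)]
      exact Finset.sorted_last_eq_max'
    -- value at position k : min of D \ B
    have hv2 : M[k]'(by omega) = (D \ B).min' hDBne := by
      have e1 : (M.drop A.card)[k - A.card]'(by omega) = M[k]'(by omega) := by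
        rw [List.getElem_drop]
        exact DCAux.getElem_congr' M (by omega) _
      rw [← e1, List.getElem_of_eq hstruct,
        List.getElem_append_right (by omega)]
      rw [DCAux.getElem_congr' _ (show k - A.card - s1.length = 0 by omega)]
      rw [List.getElem_append_left hs2pos]
      exact Finset.sorted_zero_eq_min'
    constructor
    · -- B = firstK π k
      rw [hfirst k (le_of_lt hk_lt)]
      have hdropB := DCAux.chainList_drop (l := l₀) ∅ hch0 (p + 1) (by simp [hl₀]; omega)
      simp only [List.get_eq_getElem, Finset.card_empty, Nat.sub_zero] at hdropB
      rw [List.getElem_cons_succ] at hdropB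
      have hdropB' : M.drop k = DCAux.chainList B (l₀.drop (p + 1)) := by
        simp only [hl₀p] at hdropB
        exact hdropB
      have hchainB : (B :: l₀.drop (p + 1)).Chain' (· ⊂ ·) := by
        have h1 : (l₀.drop p).Chain' (· ⊂ ·) := hch0.tail.drop p
        rwa [hseq1] at h1
      have hlastB : (B :: l₀.drop (p + 1)).getLast (by simp) = Finset.univ := by
        have hsp : l₀.drop (p + 1) = L.drop (p + 1) ++ [Finset.univ] := by
          rw [hl₀, List.drop_append_of_le_length (by omega)]
        have hsp' : B :: l₀.drop (p + 1) = (B :: L.drop (p + 1)) ++ [Finset.univ] := by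
          rw [hsp]; rfl
        have h9 : (B :: l₀.drop (p + 1)).getLast? = some Finset.univ := by
          rw [hsp']
          exact List.getLast?_concat
        rw [List.getLast?_eq_getLast (by simp)] at h9
        exact Option.some_injective _ h9
      have hdropT : (M.drop k).toFinset = Finset.univ \ B := by
        rw [hdropB', DCAux.toFinset_chainList hchainB, hlastB]
      have htake : (M.take k).toFinset = B := by
        ext x
        have hx : x ∈ M := hmemM x
        have hsplit : M.take k ++ M.drop k = M := List.take_append_drop _ _
        have hnd2 : (M.take k ++ M.drop k).Nodup := by rw [hsplit]; exact hnd
        have hdisj := (List.nodup_append.mp hnd2).2.2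
        have hdmem : ∀ y : Fin n, y ∈ M.drop k ↔ y ∉ B := by
          intro y
          rw [← List.mem_toFinset, hdropT, Finset.mem_sdiff]
          simp
        constructor
        · intro hxt
          simp only [List.mem_toFinset] at hxt
          have hxd : x ∉ M.drop k := fun hc => hdisj x hxt x hc rfl
          by_contra hxB
          exact hxd ((hdmem x).mpr hxB)
        · intro hxB
          have hxd : x ∉ M.drop k := fun hc => ((hdmem x).mp hc) hxB
          rcases List.mem_append.mp (hsplit.symm ▸ hx) with h1 | h2
          · exact List.mem_toFinset.mpr h1
          · exact absurd h2 hxd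
      exact htake.symm
    · -- descent at k
      refine ⟨hk_lt, hk_pos, ?_⟩
      rw [hπ' k hk_lt, hπ' (k - 1) (by omega), hv1, hv2]
      have hf := hface p (by rw [withSent_length]; omega)
      simp only [List.get_eq_getElem] at hf
      obtain ⟨a, ha, c, hc, hca⟩ := hf
      have ha' : a ∈ B \ A := by
        have h0 : a ∈ (∅ :: l₀)[p + 1]'(by simp [hl₀]; omega) \ A := ha
        rwa [hBc] at h0
      have hc' : c ∈ D \ B := by
        have h0 : c ∈ D \ (∅ :: l₀)[p + 1]'(by simp [hl₀]; omega) := hc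
        rwa [hBc] at h0
      calc (D \ B).min' hDBne ≤ c := Finset.min'_le _ _ hc'
        _ < a := hca
        _ ≤ (B \ A).max' hBAne := Finset.le_max' _ _ ha'
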